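/- Let k be an integral domain and let e ∈ M_2(k) be the matrix having 1 at position (1,1) and 0 elsewhere. Let S be the quotient of the free k-algebra on eight generators h_{ij}, h*_{ij} (1 ≤ i, j ≤ 2) by the two-sided ideal generated by the entries of the 2×2 matrix identities h·h* = e and h*·h = e, where h = (h_{ij}) and h* = (h*_{ij}). Then in S the following hold: h_{11}·h*_{11} = 1, h_{12}·h*_{21} = 0, the elements h_{22} and h*_{22} are nonzero, and S has zero divisors, i.e., there exist nonzero a, b ∈ S with a·b = 0. In particular S is not isomorphic to the Laurent polynomial ring k[x, x⁻¹] (which has no zero divisors). -/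

import Mathlib

open LaurentPolynomial

/-- The free `k`-algebra on the eight generators `h_{ij}, h*_{ij}` (`1 ≤ i, j ≤ 2`). -/
abbrev FreeBergman (k : Type*) [CommRing k] : Type _ :=
  FreeAlgebra k ((Fin 2 × Fin 2) ⊕ (Fin 2 × Fin 2))

/-- The matrix `h = (h_{ij})` of generators. -/
noncomputable def hMat (k : Type*) [CommRing k] :
    Matrix (Fin 2) (Fin 2) (FreeBergman k) :=
  Matrix.of fun i j => FreeAlgebra.ι k (Sum.inl (i, j))

/-- The matrix `h* = (h*_{ij})` of generators. -/
noncomputable def hStarMat (k : Type*) [CommRing k] :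
    Matrix (Fin 2) (Fin 2) (FreeBergman k) :=
  Matrix.of fun i j => FreeAlgebra.ι k (Sum.inr (i, j))

/-- The idempotent matrix `e ∈ M_2` with `1` at position `(1,1)` and zeros elsewhere,
viewed over the free algebra. -/
noncomputable def eMat (k : Type*) [CommRing k] :
    Matrix (Fin 2) (Fin 2) (FreeBergman k) :=
  Matrix.single 0 0 1

/-- Only the relations `h·h* = e` and `h*·h = e`, imposed entrywise. -/
inductive BergmanRel' (k : Type*) [CommRing k] : FreeBergman k → FreeBergman k → Prop
  | hhs (i j : Fin 2) : BergmanRel' k ((hMat k * hStarMat k) i j) (eMat k i j)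
  | hsh (i j : Fin 2) : BergmanRel' k ((hStarMat k * hMat k) i j) (eMat k i j)

/-- The substitution sending the diagonal generators to `1, ε` and off-diagonal ones to `0`. -/
noncomputable def dualGen (k : Type*) [CommRing k] :
    ((Fin 2 × Fin 2) ⊕ (Fin 2 × Fin 2)) → DualNumber k
  | Sum.inl (0, 0) => 1
  | Sum.inl (1, 1) => DualNumber.eps
  | Sum.inr (0, 0) => 1
  | Sum.inr (1, 1) => DualNumber.eps
  | _ => 0

/-- The induced algebra map from the quotient to the dual numbers. -/
noncomputable def toDual (k : Type*) [CommRing k] :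
    RingQuot (BergmanRel' k) →ₐ[k] DualNumber k :=
  RingQuot.liftAlgHom k ⟨FreeAlgebra.lift k (dualGen k), by
    rintro x y (⟨i, j⟩ | ⟨i, j⟩) <;> fin_cases i <;> fin_cases j <;>
      simp [hMat, hStarMat, eMat, Matrix.mul_apply, Fin.sum_univ_two,
        Matrix.single, dualGen, DualNumber.eps_mul_eps]⟩

theorem toDual_mk (k : Type*) [CommRing k] (x : FreeBergman k) :
    toDual k (RingQuot.mkAlgHom k (BergmanRel' k) x) = FreeAlgebra.lift k (dualGen k) x :=
  RingQuot.liftAlgHom_mkAlgHom_apply k _ _ x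

/-- Let `k` be an integral domain and let `S` be the quotient of the free `k`-algebra on
eight generators `h_{ij}, h*_{ij}` by the two-sided ideal generated by the entries of the
matrix identities `h·h* = e` and `h*·h = e` only, where `e` has a `1` at position `(1,1)`
and zeros elsewhere.  Then in `S`: `h_{11}·h*_{11} = 1`, `h_{12}·h*_{21} = 0`, the elements
`h_{22}` and `h*_{22}` are nonzero, `S` has zero divisors, and `S` is not isomorphic to

the Laurent polynomial ring `k[x, x⁻¹]`. -/
theorem bergman_without_corner_relations (k : Type*) [CommRing k] [IsDomain k] :
    RingQuot.mkAlgHom k (BergmanRel' k) (hMat k 0 0) *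
        RingQuot.mkAlgHom k (BergmanRel' k) (hStarMat k 0 0) = 1 ∧
    RingQuot.mkAlgHom k (BergmanRel' k) (hMat k 0 1) *
        RingQuot.mkAlgHom k (BergmanRel' k) (hStarMat k 1 0) = 0 ∧
    RingQuot.mkAlgHom k (BergmanRel' k) (hMat k 1 1) ≠ 0 ∧
    RingQuot.mkAlgHom k (BergmanRel' k) (hStarMat k 1 1) ≠ 0 ∧
    (∃ a b : RingQuot (BergmanRel' k), a ≠ 0 ∧ b ≠ 0 ∧ a * b = 0) ∧
    ¬ Nonempty (RingQuot (BergmanRel' k) ≃ₐ[k] LaurentPolynomial k) := by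
  
  classical
  set mk := RingQuot.mkAlgHom k (BergmanRel' k) with hmk
  set a := mk (hMat k 0 0)
  set b := mk (hMat k 0 1)
  set c := mk (hMat k 1 0)
  set d := mk (hMat k 1 1)
  set a' := mk (hStarMat k 0 0)
  set b' := mk (hStarMat k 0 1)
  set c' := mk (hStarMat k 1 0)
  set d' := mk (hStarMat k 1 1)
  have hhs : ∀ i j, mk (hMat k i 0) * mk (hStarMat k 0 j) + mk (hMat k i 1) * mk (hStarMat k 1 j)
      = mk (eMat k i j) := by
    intro i j
    have := RingQuot.mkAlgHom_rel k (BergmanRel'.hhs (k := k) i j)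
    simpa [Matrix.mul_apply, Fin.sum_univ_two, map_add, map_mul] using this
  have hsh : ∀ i j, mk (hStarMat k i 0) * mk (hMat k 0 j) + mk (hStarMat k i 1) * mk (hMat k 1 j)
      = mk (eMat k i j) := by
    intro i j
    have := RingQuot.mkAlgHom_rel k (BergmanRel'.hsh (k := k) i j)
    simpa [Matrix.mul_apply, Fin.sum_univ_two, map_add, map_mul] using this
  have e00 : mk (eMat k 0 0) = 1 := by
    simp [eMat, Matrix.single]
  have eoff : ∀ i j : Fin 2, ¬(i = 0 ∧ j = 0) → mk (eMat k i j) = 0 := by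
    intro i j hij
    have : eMat k i j = 0 := by
      simp only [eMat, Matrix.single, Matrix.of_apply]
      rw [if_neg (by tauto)]
    rw [this, map_zero]
  have E1 : a * a' + b * c' = 1 := by rw [hhs 0 0, e00]
  have E2 : a * b' + b * d' = 0 := by rw [hhs 0 1, eoff 0 1 (by simp)]
  have E3 : c * a' + d * c' = 0 := by rw [hhs 1 0, eoff 1 0 (by simp)]
  have E4 : c * b' + d * d' = 0 := by rw [hhs 1 1, eoff 1 1 (by simp)]
  have F1 : a' * a + b' * c = 1 := by rw [hsh 0 0, e00]
  have F2 : a' * b + b' * d = 0 := by rw [hsh 0 1, eoff 0 1 (by simp)]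
  have F3 : c' * a + d' * c = 0 := by rw [hsh 1 0, eoff 1 0 (by simp)]
  have F4 : c' * b + d' * d = 0 := by rw [hsh 1 1, eoff 1 1 (by simp)]
  have hb : b = 0 := by
    have h1 : b = a * (a' * b + b' * d) + b * (c' * b + d' * d) - (a * b' + b * d') * d := by
      conv_lhs => rw [← one_mul b, ← E1]
      noncomm_ring
    rw [h1, F2, F4, E2]; simp
  have hc : c = 0 := by
    have h1 : c = (c * a' + d * c') * a + (c * b' + d * d') * c - d * (c' * a + d' * c) := by
      conv_lhs => rw [← mul_one c, ← F1]
      noncomm_ring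
    rw [h1, E3, E4, F3]; simp
  have hdd' : d * d' = 0 := by
    have := E4; rw [hc, zero_mul, zero_add] at this; exact this
  have hd : d ≠ 0 := by
    intro h
    have := congrArg (toDual k) h
    rw [map_zero] at this
    have h2 : toDual k d = DualNumber.eps := by
      show toDual k (mk (hMat k 1 1)) = _
      rw [hmk, toDual_mk]
      simp [hMat, dualGen]
    rw [h2] at this
    have := congrArg TrivSqZeroExt.snd this
    simpa using this
  have hd' : d' ≠ 0 := by
    intro h
    have := congrArg (toDual k) h
    rw [map_zero] at this
    have h2 : toDual k d' = DualNumber.eps := by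
      show toDual k (mk (hStarMat k 1 1)) = _
      rw [hmk, toDual_mk]
      simp [hStarMat, dualGen]
    rw [h2] at this
    have := congrArg TrivSqZeroExt.snd this
    simpa using this
  refine ⟨?_, ?_, hd, hd', ⟨d, d', hd, hd', hdd'⟩, ?_⟩
  · have := E1; rw [hb, zero_mul, add_zero] at this; exact this
  · rw [hb, zero_mul]
  · rintro ⟨φ⟩
    have h0 : φ d * φ d' = 0 := by rw [← map_mul, hdd', map_zero]
    rcases mul_eq_zero.mp h0 with h | h
    · exact hd (EmbeddingLike.map_eq_zero_iff.mp h)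
    · exact hd' (EmbeddingLike.map_eq_zero_iff.mp h)
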